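/- Let E be a regular sublinear expectation on the space X of bounded measurable real-valued functions on (Ω, F). Then for every linear expectation L dominated by E, the set function μ(A) := L(1_A) is a (countably additive) probability measure on (Ω, F); in particular μ(Ω) = 1 and μ(A_n) ↓ 0 for every sequence of measurable sets A_n ↓ ∅. -/

import Mathlib

open MeasureTheory Set Filter Topology Classical

/-- The space of bounded measurable real-valued functions on `Ω`, as a submodule of `Ω → ℝ`. -/
def BM (Ω : Type*) [MeasurableSpace Ω] : Submodule ℝ (Ω → ℝ) where
  carrier := {f | Measurable f ∧ ∃ M : ℝ, ∀ ω, |f ω| ≤ M}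
  zero_mem' := ⟨measurable_const, 0, by simp⟩
  add_mem' := by
    rintro f g ⟨hf, Mf, hMf⟩ ⟨hg, Mg, hMg⟩
    exact ⟨hf.add hg, Mf + Mg, fun ω => (abs_add_le _ _).trans (add_le_add (hMf ω) (hMg ω))⟩
  smul_mem' := by
    rintro c f ⟨hf, Mf, hMf⟩
    refine ⟨hf.const_smul c, |c| * Mf, fun ω => ?_⟩
    simp only [Pi.smul_apply, smul_eq_mul, abs_mul]
    exact mul_le_mul_of_nonneg_left (hMf ω) (abs_nonneg c)

variable {Ω : Type*} [MeasurableSpace Ω]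

lemma mem_BM {f : Ω → ℝ} (hf : Measurable f) (M : ℝ) (hM : ∀ ω, |f ω| ≤ M) : f ∈ BM Ω :=
  ⟨hf, M, hM⟩

lemma BM.measurable (ξ : BM Ω) : Measurable (ξ : Ω → ℝ) := ξ.2.1

lemma BM.bounded (ξ : BM Ω) : ∃ M : ℝ, ∀ ω, |(ξ : Ω → ℝ) ω| ≤ M := ξ.2.2

/-- A sublinear expectation on the space of bounded measurable functions. -/
structure SLE (Ω : Type*) [MeasurableSpace Ω] where
  E : BM Ω → ℝ
  mono : ∀ ξ η : BM Ω, (∀ ω, (η : Ω → ℝ) ω ≤ (ξ : Ω → ℝ) ω) → E η ≤ E ξ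
  const_preserve : ∀ (c : ℝ) (h : (fun _ : Ω => c) ∈ BM Ω), E ⟨fun _ => c, h⟩ = c
  subadd : ∀ ξ η : BM Ω, E (ξ + η) ≤ E ξ + E η
  pos_homog : ∀ (c : ℝ), 0 ≤ c → ∀ ξ : BM Ω, E (c • ξ) = c * E ξ

/-- The constant function as an element of `BM Ω`. -/
def constBM (Ω : Type*) [MeasurableSpace Ω] (c : ℝ) : BM Ω :=
  ⟨fun _ => c, mem_BM measurable_const |c| fun _ => le_refl _⟩

/-- The indicator function of a measurable set as an element of `BM Ω`. -/
noncomputable def indBM {Ω : Type*} [MeasurableSpace Ω] (A : Set Ω) (hA : MeasurableSet A) : BM Ω :=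
  ⟨A.indicator fun _ => 1,
    mem_BM (measurable_const.indicator hA) 1 fun ω => by
      by_cases h : ω ∈ A <;> simp [Set.indicator_apply, h]⟩

/-- The product of two bounded measurable functions. -/
noncomputable def mulBM (ξ η : BM Ω) : BM Ω := by
  refine ⟨fun ω => (ξ : Ω → ℝ) ω * (η : Ω → ℝ) ω, ?_⟩
  obtain ⟨Mf, hMf⟩ := BM.bounded ξ
  obtain ⟨Mg, hMg⟩ := BM.bounded η
  refine mem_BM ((BM.measurable ξ).mul (BM.measurable η)) (max Mf 0 * max Mg 0) fun ω => ?_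
  rw [abs_mul]
  exact mul_le_mul ((hMf ω).trans (le_max_left _ _)) ((hMg ω).trans (le_max_left _ _))
    (abs_nonneg _) (le_max_right _ _)

/-- The upper capacity associated to a sublinear expectation: `C(A) = E(1_A)` for measurable `A`
(junk value `0` on non-measurable sets). -/
noncomputable def SLE.cap (𝔼 : SLE Ω) (A : Set Ω) : ℝ :=
  if h : MeasurableSet A then 𝔼.E (indBM A h) else 0

/-- The lower capacity associated to a sublinear expectation: `c(A) = -E(-1_A)` for measurable `A`
(junk value `0` on non-measurable sets). -/
noncomputable def SLE.lcap (𝔼 : SLE Ω) (A : Set Ω) : ℝ :=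
  if h : MeasurableSet A then -𝔼.E (-(indBM A h)) else 0

/-- A linear expectation dominated by the sublinear expectation `𝔼`. -/
def Dominated (𝔼 : SLE Ω) (L : BM Ω →ₗ[ℝ] ℝ) : Prop := ∀ ξ : BM Ω, L ξ ≤ 𝔼.E ξ

/-- `ξ` and `η` are uncorrelated with respect to `𝔼` if `L(ξη) = L(ξ)L(η)` for every
linear expectation `L` dominated by `𝔼`. -/
def Uncorrelated (𝔼 : SLE Ω) (ξ η : BM Ω) : Prop :=
  ∀ L : BM Ω →ₗ[ℝ] ℝ, Dominated 𝔼 L → L (mulBM ξ η) = L ξ * L η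

/-- `𝔼` is regular: if `ξ n ↓ 0` pointwise then `𝔼.E (ξ n) ↓ 0`. -/
def SLE.Regular (𝔼 : SLE Ω) : Prop :=
  ∀ ξ : ℕ → BM Ω, (∀ ω, Antitone fun n => (ξ n : Ω → ℝ) ω) →
    (∀ ω, Tendsto (fun n => (ξ n : Ω → ℝ) ω) atTop (𝓝 0)) →
    Tendsto (fun n => 𝔼.E (ξ n)) atTop (𝓝 0)

/-- The σ-field generated by `ξ a, …, ξ b`. -/
def sigmaGen (ξ : ℕ → BM Ω) (a b : ℕ) : MeasurableSpace Ω :=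
  ⨆ i ∈ Set.Icc a b, MeasurableSpace.comap (fun ω => (ξ i : Ω → ℝ) ω) inferInstance

/-- `{ξ_n}_{n ≥ 1}` is an independent sequence under `𝔼`: pairwise uncorrelated, and
`C(A ∩ B) ≤ C(A) C(B)` whenever `A ∈ σ(ξ_1, …, ξ_m)` and `B ∈ σ(ξ_{m+1}, …, ξ_n)`, `m < n`. -/
def IndepSeq (𝔼 : SLE Ω) (ξ : ℕ → BM Ω) : Prop :=
  (∀ i j, 1 ≤ i → 1 ≤ j → i ≠ j → Uncorrelated 𝔼 (ξ i) (ξ j)) ∧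
  ∀ m n : ℕ, 1 ≤ m → m < n → ∀ A B : Set Ω,
    MeasurableSet[sigmaGen ξ 1 m] A → MeasurableSet[sigmaGen ξ (m + 1) n] B →
    𝔼.cap (A ∩ B) ≤ 𝔼.cap A * 𝔼.cap B

/-- Assumption (H₀): for every disjoint measurable cover `{A_n}` of `Ω`,
the series `Σ C(A_n)` has bounded partial sums. -/
def H0 (𝔼 : SLE Ω) : Prop :=
  ∀ A : ℕ → Set Ω, (∀ n, MeasurableSet (A n)) → Pairwise (Function.onFun Disjoint A) →
    (⋃ n, A n) = Set.univ → ∃ M : ℝ, ∀ N : ℕ, ∑ n ∈ Finset.range N, 𝔼.cap (A n) < M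

lemma E_zero' (𝔼 : SLE Ω) : 𝔼.E 0 = 0 := by
  have h : (fun _ : Ω => (0:ℝ)) ∈ BM Ω := (constBM Ω 0).2
  have : (0 : BM Ω) = ⟨fun _ => 0, h⟩ := rfl
  rw [this, 𝔼.const_preserve 0 h]

lemma E_nonpos' (𝔼 : SLE Ω) (ξ : BM Ω) (h : ∀ ω, (ξ : Ω → ℝ) ω ≤ 0) : 𝔼.E ξ ≤ 0 := by
  have := 𝔼.mono 0 ξ h
  rwa [E_zero'] at this

lemma L_nonneg' (𝔼 : SLE Ω) (L : BM Ω →ₗ[ℝ] ℝ) (hL : Dominated 𝔼 L)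
    (ξ : BM Ω) (h : ∀ ω, 0 ≤ (ξ : Ω → ℝ) ω) : 0 ≤ L ξ := by
  have h1 : L (-ξ) ≤ 𝔼.E (-ξ) := hL _
  have h2 : 𝔼.E (-ξ) ≤ 0 := E_nonpos' 𝔼 (-ξ) (fun ω => by
    simpa using h ω)
  rw [map_neg] at h1
  linarith

lemma indBM_nonneg (A : Set Ω) (hA : MeasurableSet A) (ω : Ω) :
    0 ≤ ((indBM A hA : BM Ω) : Ω → ℝ) ω :=
  Set.indicator_nonneg (fun _ _ => zero_le_one) ω

lemma indBM_union (A B : Set Ω) (hA : MeasurableSet A) (hB : MeasurableSet B)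
    (hd : Disjoint A B) : indBM (A ∪ B) (hA.union hB) = indBM A hA + indBM B hB := by
  apply Subtype.ext
  exact Set.indicator_union_of_disjoint hd _

lemma indBM_diff (A B : Set Ω) (hA : MeasurableSet A) (hB : MeasurableSet B)
    (h : B ⊆ A) : indBM (A \ B) (hA.diff hB) = indBM A hA - indBM B hB := by
  apply Subtype.ext
  exact Set.indicator_sdiff h _

/-- If `𝔼` is regular, then for every linear expectation `L` dominated by `𝔼`,
`μ(A) := L(1_A)` is a countably additive probability measure; in particular `μ(Ω) = 1` and
`μ(A_n) ↓ 0` whenever `A_n ↓ ∅`. -/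
theorem dominated_is_probability (𝔼 : SLE Ω) (hreg : 𝔼.Regular)
    (L : BM Ω →ₗ[ℝ] ℝ) (hL : Dominated 𝔼 L) :
    (∀ (A : Set Ω) (hA : MeasurableSet A), 0 ≤ L (indBM A hA)) ∧
    L (indBM Set.univ MeasurableSet.univ) = 1 ∧
    (∀ (A : ℕ → Set Ω) (hA : ∀ n, MeasurableSet (A n)),
      Pairwise (Function.onFun Disjoint A) →
      HasSum (fun n => L (indBM (A n) (hA n)))
        (L (indBM (⋃ n, A n) (MeasurableSet.iUnion hA)))) ∧
    (∀ (A : ℕ → Set Ω) (hA : ∀ n, MeasurableSet (A n)), Antitone A → (⋂ n, A n) = ∅ →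
      Tendsto (fun n => L (indBM (A n) (hA n))) atTop (𝓝 0)) := by
  have Lnn : ∀ (A : Set Ω) (hA : MeasurableSet A), 0 ≤ L (indBM A hA) := fun A hA =>
    L_nonneg' 𝔼 L hL _ (indBM_nonneg A hA)
  refine ⟨Lnn, ?_, ?_, ?_⟩
  · -- L(1) = 1
    have h1 : (indBM Set.univ MeasurableSet.univ : BM Ω) = constBM Ω 1 := by
      apply Subtype.ext
      simp [indBM, constBM]
    have hE1 : 𝔼.E (constBM Ω 1) = 1 := by
      have := 𝔼.const_preserve 1 (constBM Ω 1).2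
      simpa [constBM] using this
    have hEneg : 𝔼.E (-(constBM Ω 1)) = -1 := by
      have heq : (-(constBM Ω 1) : BM Ω) = ⟨fun _ => (-1 : ℝ), (constBM Ω (-1)).2⟩ := by
        apply Subtype.ext
        funext ω; simp [constBM]
      rw [heq]; exact 𝔼.const_preserve (-1) _
    have hle : L (constBM Ω 1) ≤ 1 := le_of_le_of_eq (hL (constBM Ω 1)) hE1
    have hge : -L (constBM Ω 1) ≤ -1 := by
      have := hL (-(constBM Ω 1))
      rwa [map_neg, hEneg] at this
    rw [h1]; linarith
  · -- countable additivity
    intro A hA hdisj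
    set S : Set Ω := ⋃ n, A n with hS
    have hSm : MeasurableSet S := MeasurableSet.iUnion hA
    set B : ℕ → Set Ω := fun N => ⋃ n < N, A n with hB
    have hBm : ∀ N, MeasurableSet (B N) := fun N =>
      MeasurableSet.iUnion fun n => MeasurableSet.iUnion fun _ => hA n
    have hBsucc : ∀ N, B (N + 1) = B N ∪ A N := fun N => by
      simp [hB, Set.biUnion_lt_succ]
    have hBdisj : ∀ N, Disjoint (B N) (A N) := fun N => by
      refine Set.disjoint_left.2 fun ω hω hωA => ?_
      simp only [hB, Set.mem_iUnion] at hω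
      obtain ⟨n, hn, hωn⟩ := hω
      exact Set.disjoint_left.1 (hdisj hn.ne) hωn hωA
    have hsum : ∀ N, (∑ n ∈ Finset.range N, (indBM (A n) (hA n) : BM Ω)) =
        indBM (B N) (hBm N) := by
      intro N
      induction N with
      | zero =>
        apply Subtype.ext
        funext ω
        simp [hB, indBM]
      | succ N ih =>
        rw [Finset.sum_range_succ, ih]
        have : indBM (B (N+1)) (hBm (N+1)) =
            indBM (B N ∪ A N) ((hBm N).union (hA N)) := by
          apply Subtype.ext
          simp [hBsucc N]
        rw [this, indBM_union _ _ _ _ (hBdisj N)]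
    have hBS : ∀ N, B N ⊆ S := fun N => Set.iUnion₂_subset fun n _ => Set.subset_iUnion A n
    -- the remainder indicators tend to zero
    set ξ : ℕ → BM Ω := fun N => indBM (S \ B N) (hSm.diff (hBm N)) with hξ
    have hanti : ∀ ω, Antitone fun n => (ξ n : Ω → ℝ) ω := by
      intro ω m n hmn
      refine Set.indicator_le_indicator_of_subset ?_ (fun _ => zero_le_one) ω
      refine Set.diff_subset_diff_right ?_
      exact Set.iUnion₂_mono' fun i hi => ⟨i, hi.trans_le hmn, subset_rfl⟩
    have htend : ∀ ω, Tendsto (fun n => (ξ n : Ω → ℝ) ω) atTop (𝓝 0) := by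
      intro ω
      by_cases hωS : ω ∈ S
      · obtain ⟨k, hk⟩ := Set.mem_iUnion.1 hωS
        refine tendsto_atTop_of_eventually_const (i₀ := k + 1) fun n hn => ?_
        have : ω ∈ B n := Set.mem_iUnion.2 ⟨k, Set.mem_iUnion.2 ⟨lt_of_lt_of_le (Nat.lt_succ_self k) hn, hk⟩⟩
        simp [hξ, indBM, Set.indicator_apply, this]
      · refine tendsto_atTop_of_eventually_const (i₀ := 0) fun n _ => ?_
        simp [hξ, indBM, Set.indicator_apply, hωS]
    have hEξ : Tendsto (fun n => 𝔼.E (ξ n)) atTop (𝓝 0) := hreg ξ hanti htend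
    have hLξ : Tendsto (fun n => L (ξ n)) atTop (𝓝 0) := by
      refine squeeze_zero (fun n => L_nonneg' 𝔼 L hL _ (indBM_nonneg _ _)) (fun n => hL _) hEξ
    have hdiff : ∀ N, L (ξ N) = L (indBM S hSm) - ∑ n ∈ Finset.range N, L (indBM (A n) (hA n)) := by
      intro N
      have : (ξ N : BM Ω) = indBM S hSm - indBM (B N) (hBm N) :=
        indBM_diff _ _ _ _ (hBS N)
      rw [this, map_sub, ← hsum N, map_sum]
    rw [hasSum_iff_tendsto_nat_of_nonneg (fun n => Lnn _ _)]
    have : Tendsto (fun N => L (indBM S hSm) - L (ξ N)) atTop (𝓝 (L (indBM S hSm) - 0)) :=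
      tendsto_const_nhds.sub hLξ
    simp only [sub_zero] at this
    refine this.congr fun N => ?_
    rw [hdiff N]; ring
  · -- continuity at ∅
    intro A hA hanti hempty
    set ξ : ℕ → BM Ω := fun n => indBM (A n) (hA n) with hξ
    have hanti' : ∀ ω, Antitone fun n => (ξ n : Ω → ℝ) ω := by
      intro ω m n hmn
      exact Set.indicator_le_indicator_of_subset (hanti hmn) (fun _ => zero_le_one) ω
    have htend : ∀ ω, Tendsto (fun n => (ξ n : Ω → ℝ) ω) atTop (𝓝 0) := by
      intro ω
      have : ω ∉ ⋂ n, A n := by rw [hempty]; exact Set.notMem_empty ω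
      obtain ⟨k, hk⟩ := by simpa [Set.mem_iInter] using this
      refine tendsto_atTop_of_eventually_const (i₀ := k) fun n hn => ?_
      have : ω ∉ A n := fun h => hk (hanti hn h)
      simp [hξ, indBM, Set.indicator_apply, this]
    exact squeeze_zero (fun n => Lnn _ _) (fun n => hL _) (hreg ξ hanti' htend)
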